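/- Let a, b, c, d be real numbers, each at least 1, satisfying 1 + a² ≥ (1 + c²)(1 + b²) and 1 + d² ≥ (1 + c²)(1 + b²), and set α² = b²/(1 + b²). Then min{log₂(α²·a²/(2(1 − α²)·a² + 1)), log₂(α²·b²/((1 − α²)·b² + 1)), log₂(1 + d²/c²)} + min{log₂((1 − α²)·a²), log₂(1 + c²)} ≥ log₂(1 + c²) + log₂(1 + b²) − 4. -/

import Mathlib

open Real

/-- The achievable rate `R_u + R_v` in the symmetric two-way Gaussian diamond
channel of Theorem 3 is within 4 bits of the cut-set bound
`log₂(1 + c²) + log₂(1 + b²)` in each direction. -/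
theorem four_bit_gap (a b c d : ℝ)
    (ha : 1 ≤ a) (hb : 1 ≤ b) (hc : 1 ≤ c) (hd : 1 ≤ d)
    (hcut1 : 1 + a ^ 2 ≥ (1 + c ^ 2) * (1 + b ^ 2))
    (hcut2 : 1 + d ^ 2 ≥ (1 + c ^ 2) * (1 + b ^ 2))
    (α2 : ℝ) (hα2 : α2 = b ^ 2 / (1 + b ^ 2)) :
    min (logb 2 (α2 * a ^ 2 / (2 * (1 - α2) * a ^ 2 + 1)))
        (min (logb 2 (α2 * b ^ 2 / ((1 - α2) * b ^ 2 + 1)))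
          (logb 2 (1 + d ^ 2 / c ^ 2))) +
      min (logb 2 ((1 - α2) * a ^ 2)) (logb 2 (1 + c ^ 2)) ≥
    logb 2 (1 + c ^ 2) + logb 2 (1 + b ^ 2) - 4 := by
  have h2 : (1:ℝ) < 2 := one_lt_two
  have hb1 : (1:ℝ) ≤ b ^ 2 := one_le_sq_iff_one_le_abs .. |>.mpr (by rw [abs_of_nonneg (by linarith)]; exact hb)
  have hc1 : (1:ℝ) ≤ c ^ 2 := one_le_sq_iff_one_le_abs .. |>.mpr (by rw [abs_of_nonneg (by linarith)]; exact hc)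
  have ha1 : (1:ℝ) ≤ a ^ 2 := one_le_sq_iff_one_le_abs .. |>.mpr (by rw [abs_of_nonneg (by linarith)]; exact ha)
  have hb2 : (0:ℝ) < 1 + b ^ 2 := by positivity
  have hc2 : (0:ℝ) < 1 + c ^ 2 := by positivity
  have hcpos : (0:ℝ) < c ^ 2 := by linarith
  have ha2 : a ^ 2 ≥ 1 + 2 * b ^ 2 := by nlinarith
  have hd2 : d ^ 2 ≥ c ^ 2 * (1 + b ^ 2) := by nlinarith
  have h1a : 1 - α2 = 1 / (1 + b ^ 2) := by rw [hα2]; field_simp; ring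
  -- simplify the three u-arguments
  have eA1 : α2 * a ^ 2 / (2 * (1 - α2) * a ^ 2 + 1)
      = b ^ 2 * a ^ 2 / (2 * a ^ 2 + 1 + b ^ 2) := by
    rw [h1a, hα2]; rw [div_eq_div_iff (by positivity) (by positivity)]; field_simp; ring
  have eA2 : α2 * b ^ 2 / ((1 - α2) * b ^ 2 + 1)
      = b ^ 2 * b ^ 2 / (1 + 2 * b ^ 2) := by
    rw [h1a, hα2]; rw [div_eq_div_iff (by positivity) (by positivity)]; field_simp; ring
  have eS1 : (1 - α2) * a ^ 2 = a ^ 2 / (1 + b ^ 2) := by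
    rw [hα2]; field_simp; ring
  -- lower bounds on the arguments
  have bA1 : (1 + b ^ 2) / 8 ≤ b ^ 2 * a ^ 2 / (2 * a ^ 2 + 1 + b ^ 2) := by
    rw [div_le_div_iff₀ (by norm_num) (by positivity)]
    nlinarith
  have bA2 : (1 + b ^ 2) / 8 ≤ b ^ 2 * b ^ 2 / (1 + 2 * b ^ 2) := by
    rw [div_le_div_iff₀ (by norm_num) (by positivity)]
    nlinarith
  have bA3 : (1 + b ^ 2) / 8 ≤ 1 + d ^ 2 / c ^ 2 := by
    have : (1 + b ^ 2) ≤ d ^ 2 / c ^ 2 := by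
      rw [le_div_iff₀ hcpos]; nlinarith
    linarith
  have bS1 : (1 + c ^ 2) / 2 ≤ a ^ 2 / (1 + b ^ 2) := by
    rw [div_le_div_iff₀ (by norm_num) hb2]
    nlinarith
  -- log of the bounds
  have l8 : logb 2 ((1 + b ^ 2) / 8) = logb 2 (1 + b ^ 2) - 3 := by
    rw [logb_div (by positivity) (by norm_num)]
    rw [show (8:ℝ) = 2 ^ (3:ℕ) by norm_num, logb_pow, logb_self_eq_one h2]
    push_cast; ring
  have l2 : logb 2 ((1 + c ^ 2) / 2) = logb 2 (1 + c ^ 2) - 1 := by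
    rw [logb_div (by positivity) (by norm_num), logb_self_eq_one h2]
  have hpos8 : (0:ℝ) < (1 + b ^ 2) / 8 := by positivity
  have hpos2 : (0:ℝ) < (1 + c ^ 2) / 2 := by positivity
  have hu : logb 2 (1 + b ^ 2) - 3 ≤
      min (logb 2 (α2 * a ^ 2 / (2 * (1 - α2) * a ^ 2 + 1)))
        (min (logb 2 (α2 * b ^ 2 / ((1 - α2) * b ^ 2 + 1)))
          (logb 2 (1 + d ^ 2 / c ^ 2))) := by
    rw [← l8]
    refine le_min ?_ (le_min ?_ ?_)
    · rw [eA1]; exact logb_le_logb_of_le h2 hpos8 bA1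
    · rw [eA2]; exact logb_le_logb_of_le h2 hpos8 bA2
    · exact logb_le_logb_of_le h2 hpos8 bA3
  have hv : logb 2 (1 + c ^ 2) - 1 ≤
      min (logb 2 ((1 - α2) * a ^ 2)) (logb 2 (1 + c ^ 2)) := by
    refine le_min ?_ (by linarith)
    rw [eS1, ← l2]
    exact logb_le_logb_of_le h2 hpos2 bS1
  linarith
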